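/- There is no perfect strategy for the coherent embezzlement game in the tensor product framework, even with ancillas: for all types R_A, R_B, G_A, G_B, writing X := Fin 3 × R_A × G_A, Y := Fin 3 × R_B × G_B and K := ℓ²(X × Y), there do NOT exist unit vectors ψ ∈ ℓ²(R_A × R_B), γ_A ∈ ℓ²(G_A), γ_B ∈ ℓ²(G_B), bounded operators P : Fin 2 → (ℓ²(X) →L[ℂ] ℓ²(X)) and Q : Fin 2 → (ℓ²(Y) →L[ℂ] ℓ²(Y)) with each P a and Q b a self-adjoint idempotent, P 0 + P 1 = 1 and Q 0 + Q 1 = 1, and bounded operators P̂ a, Q̂ b on K such that each P̂ a is the amplification of P a to the first factor and each Q̂ b is the amplification of Q b to the second factor, satisfying: for all c, a, b ∈ Fin 2 with a + b ≠ c (mod 2), P̂ a (Q̂ b Φ_c) = 0, where Φ_c ∈ K is the vector with coordinates Φ_c ((i, r_A, g_A), (j, r_B, g_B)) = (α c i j) * ψ (r_A, r_B) * γ_A g_A * γ_B g_B. -/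

import Mathlib

/-- `ℓ²(X)`: the Hilbert space of square-summable families of complex numbers indexed by `X`. -/
noncomputable abbrev l2 (X : Type*) := lp (fun _ : X => ℂ) 2

/-- `W` is the amplification of the bounded operator `T` to the first factor of
`ℓ²(X × Y)`. -/
def IsAmplificationFst {X Y : Type*} (T : l2 X →L[ℂ] l2 X)
    (W : l2 (X × Y) →L[ℂ] l2 (X × Y)) : Prop :=
  ∀ (f : l2 (X × Y)) (g : l2 X) (y : Y),
    (∀ x, g x = f (x, y)) → ∀ x, (W f) (x, y) = (T g) x

/-- `W` is the amplification of the bounded operator `T` to the second factor of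
`ℓ²(X × Y)`. -/
def IsAmplificationSnd {X Y : Type*} (T : l2 Y →L[ℂ] l2 Y)
    (W : l2 (X × Y) →L[ℂ] l2 (X × Y)) : Prop :=
  ∀ (f : l2 (X × Y)) (g : l2 Y) (x : X),
    (∀ y, g y = f (x, y)) → ∀ y, (W f) (x, y) = (T g) y

/-- The coefficients of the two input states `φ_c` of the Regev–Vidick coherent
embezzlement game: `α c 0 0 = 1/√2`, `α c 1 1 = α c 2 2 = (-1)^c / 2`, and `0` otherwise. -/
noncomputable def gameCoeff (c : Fin 2) (i j : Fin 3) : ℂ :=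
  if i = 0 ∧ j = 0 then 1 / Real.sqrt 2
  else if i = j then (-1) ^ (c : ℕ) / 2
  else 0

set_option maxHeartbeats 1000000

namespace NoEmbez
open scoped ComplexConjugate

local notation "⟪" x ", " y "⟫" => @inner ℂ _ _ x y

variable {I U V : Type*}

lemma summable_sq (f : l2 I) : Summable fun i => ‖f i‖ ^ 2 := by
  have h := (lp.memℓp f).summable (p := 2) (by norm_num)
  simpa [Real.rpow_natCast] using h

lemma memℓp_of_sq {f : I → ℂ} (h : Summable fun i => ‖f i‖ ^ 2) : Memℓp f 2 := by
  apply memℓp_gen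
  simpa [Real.rpow_natCast] using h

lemma l2_norm_sq (f : l2 I) : ‖f‖ ^ 2 = ∑' i, ‖f i‖ ^ 2 := by
  have h := lp.norm_rpow_eq_tsum (p := 2) (by norm_num) f
  simpa [Real.rpow_natCast] using h

lemma inner_eq (f g : l2 I) : ⟪f, g⟫ = ∑' i, conj (f i) * g i := by
  rw [lp.inner_eq_tsum]; exact tsum_congr fun i => by simp [RCLike.inner_apply, mul_comm]

lemma summable_norm_mul (f g : l2 I) : Summable fun i => ‖f i‖ * ‖g i‖ := by
  refine Summable.of_nonneg_of_le (fun i => by positivity) (fun i => ?_)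
    (((summable_sq f).add (summable_sq g)).div_const 2)
  nlinarith [sq_nonneg (‖f i‖ - ‖g i‖)]

/-- The coordinatewise absolute value of an `ℓ²` element. -/
noncomputable def l2abs (f : l2 I) : l2 I :=
  ⟨fun i => (‖f i‖ : ℂ), memℓp_of_sq (by simpa using summable_sq f)⟩

@[simp] lemma l2abs_apply (f : l2 I) (i : I) : l2abs f i = (‖f i‖ : ℂ) := rfl

lemma l2abs_norm (f : l2 I) : ‖l2abs f‖ = ‖f‖ := by
  have h1 : ‖l2abs f‖ ^ 2 = ‖f‖ ^ 2 := by
    rw [l2_norm_sq, l2_norm_sq f]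
    exact tsum_congr fun i => by simp
  have h2 := congrArg Real.sqrt h1
  simpa [Real.sqrt_sq, norm_nonneg] using h2

lemma tsum_norm_mul_le (f g : l2 I) : ∑' i, ‖f i‖ * ‖g i‖ ≤ ‖f‖ * ‖g‖ := by
  have h1 : ((∑' i, ‖f i‖ * ‖g i‖ : ℝ) : ℂ) = ⟪l2abs f, l2abs g⟫ := by
    rw [inner_eq, Complex.ofReal_tsum]
    exact tsum_congr fun i => by simp [Complex.conj_ofReal]
  have h2 : ∑' i, ‖f i‖ * ‖g i‖ = ‖⟪l2abs f, l2abs g⟫‖ := by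
    rw [← h1]
    have h0 : (0:ℝ) ≤ ∑' i, ‖f i‖ * ‖g i‖ := tsum_nonneg fun i => by positivity
    rw [Complex.norm_real]
    exact (abs_of_nonneg h0).symm
  rw [h2, ← l2abs_norm f, ← l2abs_norm g]
  exact norm_inner_le_norm _ _

/-- Row slice of an element of `ℓ²(U × V)`. -/
def rowLp (ξ : l2 (U × V)) (u : U) : l2 V :=
  ⟨fun v => ξ (u, v), memℓp_of_sq ((summable_sq ξ).comp_injective
    (fun a b hab => by simpa using congrArg Prod.snd hab))⟩

@[simp] lemma rowLp_apply (ξ : l2 (U × V)) (u : U) (v : V) : rowLp ξ u v = ξ (u, v) := rfl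

/-- Column slice of an element of `ℓ²(U × V)`. -/
def colLp (ξ : l2 (U × V)) (v : V) : l2 U :=
  ⟨fun u => ξ (u, v), memℓp_of_sq ((summable_sq ξ).comp_injective
    (fun a b hab => by simpa using congrArg Prod.fst hab))⟩

@[simp] lemma colLp_apply (ξ : l2 (U × V)) (v : V) (u : U) : colLp ξ v u = ξ (u, v) := rfl

lemma summable_row_sums (ξ : l2 (U × V)) : Summable fun u => ∑' v, ‖ξ (u, v)‖ ^ 2 :=
  ((summable_prod_of_nonneg (fun p => by positivity)).1 (summable_sq ξ)).2

lemma summable_col_sums (ξ : l2 (U × V)) : Summable fun v => ∑' u, ‖ξ (u, v)‖ ^ 2 := by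
  have h : Summable fun p : V × U => ‖ξ (p.2, p.1)‖ ^ 2 :=
    (Equiv.prodComm U V).summable_iff.1 ((summable_sq ξ).congr fun _ => rfl)
  exact ((summable_prod_of_nonneg (fun p => by positivity)).1 h).2

lemma rowLp_norm_sq (ξ : l2 (U × V)) (u : U) : ‖rowLp ξ u‖ ^ 2 = ∑' v, ‖ξ (u, v)‖ ^ 2 := by
  rw [l2_norm_sq]; rfl

lemma colLp_norm_sq (ξ : l2 (U × V)) (v : V) : ‖colLp ξ v‖ ^ 2 = ∑' u, ‖ξ (u, v)‖ ^ 2 := by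
  rw [l2_norm_sq]; rfl

lemma summable_rho_row (ξ : l2 (U × V)) :
    Summable fun p : U × U => ‖⟪rowLp ξ p.1, rowLp ξ p.2⟫‖ ^ 2 := by
  refine Summable.of_nonneg_of_le (fun p => by positivity) (fun p => ?_)
    (((summable_row_sums ξ).mul_of_nonneg (summable_row_sums ξ)
      (fun u => tsum_nonneg fun v => by positivity)
      (fun u => tsum_nonneg fun v => by positivity)))
  calc ‖⟪rowLp ξ p.1, rowLp ξ p.2⟫‖ ^ 2 ≤ (‖rowLp ξ p.1‖ * ‖rowLp ξ p.2‖) ^ 2 := by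
        exact pow_le_pow_left₀ (norm_nonneg _)
          (norm_inner_le_norm (𝕜 := ℂ) (rowLp ξ p.1) (rowLp ξ p.2)) 2
    _ = (∑' v, ‖ξ (p.1, v)‖ ^ 2) * ∑' v, ‖ξ (p.2, v)‖ ^ 2 := by
        rw [mul_pow, rowLp_norm_sq, rowLp_norm_sq]

lemma summable_rho_col (ξ : l2 (U × V)) :
    Summable fun p : V × V => ‖⟪colLp ξ p.1, colLp ξ p.2⟫‖ ^ 2 := by
  refine Summable.of_nonneg_of_le (fun p => by positivity) (fun p => ?_)
    (((summable_col_sums ξ).mul_of_nonneg (summable_col_sums ξ)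
      (fun v => tsum_nonneg fun u => by positivity)
      (fun v => tsum_nonneg fun u => by positivity)))
  calc ‖⟪colLp ξ p.1, colLp ξ p.2⟫‖ ^ 2 ≤ (‖colLp ξ p.1‖ * ‖colLp ξ p.2‖) ^ 2 :=
        pow_le_pow_left₀ (norm_nonneg _)
          (norm_inner_le_norm (𝕜 := ℂ) (colLp ξ p.1) (colLp ξ p.2)) 2
    _ = (∑' u, ‖ξ (u, p.1)‖ ^ 2) * ∑' u, ‖ξ (u, p.2)‖ ^ 2 := by
        rw [mul_pow, colLp_norm_sq, colLp_norm_sq]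

/-- Squared Hilbert–Schmidt norm of the "reduced density matrix" over the first factor. -/
noncomputable def Fr (ξ : l2 (U × V)) : ℝ :=
  ∑' p : U × U, ‖⟪rowLp ξ p.1, rowLp ξ p.2⟫‖ ^ 2

/-- Squared Hilbert–Schmidt norm of the "reduced density matrix" over the second factor. -/
noncomputable def Fc (ξ : l2 (U × V)) : ℝ :=
  ∑' p : V × V, ‖⟪colLp ξ p.1, colLp ξ p.2⟫‖ ^ 2

lemma norm_sq_cast (z : ℂ) : ((‖z‖ ^ 2 : ℝ) : ℂ) = conj z * z := by
  simp [Complex.normSq_eq_norm_sq, Complex.mul_conj, mul_comm]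

section Fubini

variable (ξ : l2 (U × V))

/-- The 4-index family whose sum computes both `Fr` and `Fc`. -/
private noncomputable def g4 (q : (U × U) × (V × V)) : ℂ :=
  (ξ (q.1.1, q.2.1) * conj (ξ (q.1.2, q.2.1))) * (conj (ξ (q.1.1, q.2.2)) * ξ (q.1.2, q.2.2))

lemma summable_g4_norm : Summable fun q => ‖g4 ξ q‖ := by
  rw [summable_prod_of_nonneg (fun q => norm_nonneg _)]
  constructor
  · rintro ⟨u, u'⟩
    have hb : Summable fun v => ‖ξ (u, v)‖ * ‖ξ (u', v)‖ := by
      have := summable_norm_mul (rowLp ξ u) (rowLp ξ u')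
      simpa using this
    refine ((hb.mul_of_nonneg hb (fun v => by positivity) (fun v => by positivity)).congr ?_)
    rintro ⟨v, v'⟩
    simp [g4, norm_mul, RCLike.norm_conj]
  · refine Summable.of_nonneg_of_le (fun p => tsum_nonneg fun q => norm_nonneg _) (fun p => ?_)
      ((summable_row_sums ξ).mul_of_nonneg (summable_row_sums ξ)
        (fun u => tsum_nonneg fun v => by positivity)
        (fun u => tsum_nonneg fun v => by positivity))
    obtain ⟨u, u'⟩ := p
    have hb : Summable fun v => ‖ξ (u, v)‖ * ‖ξ (u', v)‖ := by
      simpa using summable_norm_mul (rowLp ξ u) (rowLp ξ u')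
    have hprod : Summable fun z : V × V =>
        (‖ξ (u, z.1)‖ * ‖ξ (u', z.1)‖) * (‖ξ (u, z.2)‖ * ‖ξ (u', z.2)‖) :=
      hb.mul_of_nonneg hb (fun v => by positivity) (fun v => by positivity)
    have he : ∀ z : V × V, ‖g4 ξ ((u, u'), z)‖
        = (‖ξ (u, z.1)‖ * ‖ξ (u', z.1)‖) * (‖ξ (u, z.2)‖ * ‖ξ (u', z.2)‖) := by
      rintro ⟨v, v'⟩
      simp [g4, norm_mul, RCLike.norm_conj]
    calc ∑' z : V × V, ‖g4 ξ ((u, u'), z)‖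
        = (∑' v, ‖ξ (u, v)‖ * ‖ξ (u', v)‖) * (∑' v, ‖ξ (u, v)‖ * ‖ξ (u', v)‖) := by
          rw [tsum_congr he, ← Summable.tsum_mul_tsum hb hb hprod]
      _ ≤ (‖rowLp ξ u‖ * ‖rowLp ξ u'‖) * (‖rowLp ξ u‖ * ‖rowLp ξ u'‖) := by
          have h1 : ∑' v, ‖ξ (u, v)‖ * ‖ξ (u', v)‖ ≤ ‖rowLp ξ u‖ * ‖rowLp ξ u'‖ := by
            simpa using tsum_norm_mul_le (rowLp ξ u) (rowLp ξ u')
          have h0 : (0:ℝ) ≤ ∑' v, ‖ξ (u, v)‖ * ‖ξ (u', v)‖ :=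
            tsum_nonneg fun v => by positivity
          exact mul_le_mul h1 h1 h0 (by positivity)
      _ = (∑' v, ‖ξ (u, v)‖ ^ 2) * ∑' v, ‖ξ (u', v)‖ ^ 2 := by
          rw [← rowLp_norm_sq, ← rowLp_norm_sq]; ring

lemma summable_g4 : Summable (g4 ξ) := (summable_g4_norm ξ).of_norm

lemma perpair_row (u u' : U) :
    ((‖⟪rowLp ξ u, rowLp ξ u'⟫‖ ^ 2 : ℝ) : ℂ) = ∑' z : V × V, g4 ξ ((u, u'), z) := by
  rw [norm_sq_cast]
  have hρ : ⟪rowLp ξ u, rowLp ξ u'⟫ = ∑' v, conj (ξ (u, v)) * ξ (u', v) := by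
    rw [inner_eq]; rfl
  have hconj : conj ⟪rowLp ξ u, rowLp ξ u'⟫ = ∑' v, ξ (u, v) * conj (ξ (u', v)) := by
    rw [hρ, starRingEnd_apply, tsum_star]
    exact tsum_congr fun v => by simp [mul_comm]
  rw [hconj, hρ]
  have hf : Summable fun v => ‖ξ (u, v) * conj (ξ (u', v))‖ := by
    have := summable_norm_mul (rowLp ξ u) (rowLp ξ u')
    refine this.congr fun v => ?_
    simp [norm_mul, RCLike.norm_conj]
  have hg : Summable fun v => ‖conj (ξ (u, v)) * ξ (u', v)‖ := by
    have := summable_norm_mul (rowLp ξ u) (rowLp ξ u')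
    refine this.congr fun v => ?_
    simp [norm_mul, RCLike.norm_conj]
  exact tsum_mul_tsum_of_summable_norm hf hg

lemma perpair_col (v v' : V) :
    ((‖⟪colLp ξ v, colLp ξ v'⟫‖ ^ 2 : ℝ) : ℂ) = ∑' z : U × U, g4 ξ (z, (v, v')) := by
  rw [norm_sq_cast]
  have hρ : ⟪colLp ξ v, colLp ξ v'⟫ = ∑' u, conj (ξ (u, v)) * ξ (u, v') := by
    rw [inner_eq]; rfl
  have hconj : conj ⟪colLp ξ v, colLp ξ v'⟫ = ∑' u, ξ (u, v) * conj (ξ (u, v')) := by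
    rw [hρ, starRingEnd_apply, tsum_star]
    exact tsum_congr fun u => by simp [mul_comm]
  rw [hconj, hρ]
  have hf : Summable fun u => ‖ξ (u, v) * conj (ξ (u, v'))‖ := by
    have := summable_norm_mul (colLp ξ v) (colLp ξ v')
    refine this.congr fun u => ?_
    simp [norm_mul, RCLike.norm_conj]
  have hg : Summable fun u => ‖conj (ξ (u, v)) * ξ (u, v')‖ := by
    have := summable_norm_mul (colLp ξ v) (colLp ξ v')
    refine this.congr fun u => ?_
    simp [norm_mul, RCLike.norm_conj]
  calc (∑' u, ξ (u, v) * conj (ξ (u, v'))) * ∑' u, conj (ξ (u, v)) * ξ (u, v')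
      = ∑' z : U × U, (ξ (z.1, v) * conj (ξ (z.1, v'))) * (conj (ξ (z.2, v)) * ξ (z.2, v')) :=
        tsum_mul_tsum_of_summable_norm hf hg
    _ = ∑' z : U × U, g4 ξ (z, (v, v')) := tsum_congr fun z => by simp [g4]; ring

theorem Fr_eq_Fc : Fr ξ = Fc ξ := by
  have hsum := summable_g4 ξ
  have hr : ((Fr ξ : ℝ) : ℂ) = ∑' q : (U × U) × (V × V), g4 ξ q := by
    rw [Fr, Complex.ofReal_tsum]
    calc ∑' p : U × U, ((‖⟪rowLp ξ p.1, rowLp ξ p.2⟫‖ ^ 2 : ℝ) : ℂ)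
        = ∑' p : U × U, ∑' z : V × V, g4 ξ (p, z) :=
          tsum_congr fun p => perpair_row ξ p.1 p.2
      _ = ∑' q : (U × U) × (V × V), g4 ξ q :=
          (Summable.tsum_prod' hsum fun p => hsum.prod_factor p).symm
  have hswap : Summable fun q : (V × V) × (U × U) => g4 ξ (q.2, q.1) :=
    ((Equiv.prodComm (V × V) (U × U)).summable_iff.2 hsum).congr fun q => rfl
  have hc : ((Fc ξ : ℝ) : ℂ) = ∑' q : (U × U) × (V × V), g4 ξ q := by
    rw [Fc, Complex.ofReal_tsum]
    calc ∑' p : V × V, ((‖⟪colLp ξ p.1, colLp ξ p.2⟫‖ ^ 2 : ℝ) : ℂ)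
        = ∑' p : V × V, ∑' z : U × U, g4 ξ (z, p) :=
          tsum_congr fun p => perpair_col ξ p.1 p.2
      _ = ∑' q : (V × V) × (U × U), g4 ξ (q.2, q.1) :=
          (Summable.tsum_prod' hswap fun p => hswap.prod_factor p).symm
      _ = ∑' q : (U × U) × (V × V), g4 ξ q :=
          ((Equiv.prodComm (U × U) (V × V)).tsum_eq fun q : (V × V) × (U × U) =>
            g4 ξ (q.2, q.1)).symm
  exact Complex.ofReal_injective (hr.trans hc.symm)

end Fubini

section Amp

lemma ampSnd_row {B : l2 V →L[ℂ] l2 V} {W : l2 (U × V) →L[ℂ] l2 (U × V)}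
    (hW : IsAmplificationSnd B W) (ξ : l2 (U × V)) (u : U) :
    rowLp (W ξ) u = B (rowLp ξ u) :=
  lp.ext (funext fun v => hW ξ (rowLp ξ u) u (fun _ => rfl) v)

lemma ampFst_col {A : l2 U →L[ℂ] l2 U} {W : l2 (U × V) →L[ℂ] l2 (U × V)}
    (hW : IsAmplificationFst A W) (ξ : l2 (U × V)) (v : V) :
    colLp (W ξ) v = A (colLp ξ v) :=
  lp.ext (funext fun u => hW ξ (colLp ξ v) v (fun _ => rfl) u)

lemma Fr_amp {B : l2 V →L[ℂ] l2 V} {W : l2 (U × V) →L[ℂ] l2 (U × V)}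
    (hW : IsAmplificationSnd B W) (hB : ∀ f g : l2 V, ⟪B f, B g⟫ = ⟪f, g⟫)
    (ξ : l2 (U × V)) : Fr (W ξ) = Fr ξ := by
  unfold Fr
  exact tsum_congr fun p => by rw [ampSnd_row hW, ampSnd_row hW, hB]

lemma Fc_amp {A : l2 U →L[ℂ] l2 U} {W : l2 (U × V) →L[ℂ] l2 (U × V)}
    (hW : IsAmplificationFst A W) (hA : ∀ f g : l2 U, ⟪A f, A g⟫ = ⟪f, g⟫)
    (ξ : l2 (U × V)) : Fc (W ξ) = Fc ξ := by
  unfold Fc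
  exact tsum_congr fun p => by rw [ampFst_col hW, ampFst_col hW, hA]

end Amp

section Product

variable {R S GA GB : Type*}

lemma inner_row_prod (β : Fin 3 → Fin 3 → ℂ) (ψ : l2 (R × S)) (γA : l2 GA) (γB : l2 GB)
    (ξ : l2 ((Fin 3 × R × GA) × (Fin 3 × S × GB)))
    (hξ : ∀ i r g j s h, ξ ((i, r, g), (j, s, h)) = β i j * (ψ (r, s) * (γA g * γB h)))
    (i : Fin 3) (r : R) (g : GA) (i' : Fin 3) (r' : R) (g' : GA) :
    ⟪rowLp ξ (i, r, g), rowLp ξ (i', r', g')⟫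
      = (∑ j, conj (β i j) * β i' j)
        * ((⟪rowLp ψ r, rowLp ψ r'⟫ * ⟪γB, γB⟫) * (conj (γA g) * γA g')) := by
  have hu : Summable fun j : Fin 3 => ‖conj (β i j) * β i' j‖ := Summable.of_finite
  have hv : Summable fun s : S => ‖conj (ψ (r, s)) * ψ (r', s)‖ :=
    (summable_norm_mul (rowLp ψ r) (rowLp ψ r')).congr fun s => by
      simp [norm_mul, RCLike.norm_conj]
  have hw : Summable fun h : GB => ‖conj (γB h) * γB h‖ :=
    (summable_norm_mul γB γB).congr fun h => by simp [norm_mul, RCLike.norm_conj]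
  have hvwn : Summable fun p : S × GB =>
      ‖(conj (ψ (r, p.1)) * ψ (r', p.1)) * (conj (γB p.2) * γB p.2)‖ :=
    ((hv.mul_of_nonneg hw (fun _ => norm_nonneg _) (fun _ => norm_nonneg _)).congr
      fun p => (norm_mul _ _).symm)
  have hvw : ∑' p : S × GB, (conj (ψ (r, p.1)) * ψ (r', p.1)) * (conj (γB p.2) * γB p.2)
      = ⟪rowLp ψ r, rowLp ψ r'⟫ * ⟪γB, γB⟫ := by
    rw [inner_eq, inner_eq]
    exact (tsum_mul_tsum_of_summable_norm hv hw).symm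
  have hsplit := tsum_mul_tsum_of_summable_norm
    (f := fun j : Fin 3 => conj (β i j) * β i' j)
    (g := fun p : S × GB => (conj (ψ (r, p.1)) * ψ (r', p.1)) * (conj (γB p.2) * γB p.2))
    hu hvwn
  calc ⟪rowLp ξ (i, r, g), rowLp ξ (i', r', g')⟫
      = ∑' y : Fin 3 × S × GB, conj (ξ ((i, r, g), y)) * ξ ((i', r', g'), y) := by
        rw [inner_eq]; exact tsum_congr fun y => rfl
    _ = ∑' y : Fin 3 × S × GB,
          ((fun j : Fin 3 => conj (β i j) * β i' j) y.1
            * (fun p : S × GB =>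
                (conj (ψ (r, p.1)) * ψ (r', p.1)) * (conj (γB p.2) * γB p.2)) y.2)
          * (conj (γA g) * γA g') := by
        refine tsum_congr ?_
        rintro ⟨j, s, h⟩
        rw [hξ, hξ]
        simp only [map_mul]
        ring
    _ = (∑' y : Fin 3 × S × GB,
          (fun j : Fin 3 => conj (β i j) * β i' j) y.1
            * (fun p : S × GB =>
                (conj (ψ (r, p.1)) * ψ (r', p.1)) * (conj (γB p.2) * γB p.2)) y.2)
          * (conj (γA g) * γA g') := tsum_mul_right
    _ = ((∑' j : Fin 3, conj (β i j) * β i' j)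
          * ∑' p : S × GB, (conj (ψ (r, p.1)) * ψ (r', p.1)) * (conj (γB p.2) * γB p.2))
          * (conj (γA g) * γA g') := by
        exact congrArg (fun t => t * (conj (γA g) * γA g')) hsplit.symm
    _ = ((∑' j : Fin 3, conj (β i j) * β i' j) * (⟪rowLp ψ r, rowLp ψ r'⟫ * ⟪γB, γB⟫))
          * (conj (γA g) * γA g') := by rw [hvw]
    _ = (∑ j, conj (β i j) * β i' j)
          * ((⟪rowLp ψ r, rowLp ψ r'⟫ * ⟪γB, γB⟫) * (conj (γA g) * γA g')) := by
        rw [tsum_fintype]; ring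

lemma Fr_prod (β : Fin 3 → Fin 3 → ℂ) (ψ : l2 (R × S)) (γA : l2 GA) (γB : l2 GB)
    (hγA : ‖γA‖ = 1) (hγB : ‖γB‖ = 1)
    (ξ : l2 ((Fin 3 × R × GA) × (Fin 3 × S × GB)))
    (hξ : ∀ i r g j s h, ξ ((i, r, g), (j, s, h)) = β i j * (ψ (r, s) * (γA g * γB h))) :
    Fr ξ = (∑ i, ∑ i', ‖∑ j, conj (β i j) * β i' j‖ ^ 2) * Fr ψ := by
  have hBB : ⟪γB, γB⟫ = ((1 : ℝ) : ℂ) := by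
    rw [inner_self_eq_norm_sq_to_K, hγB]; norm_num
  have hpoint : ∀ (i : Fin 3) (r : R) (g : GA) (i' : Fin 3) (r' : R) (g' : GA),
      ‖⟪rowLp ξ (i, r, g), rowLp ξ (i', r', g')⟫‖ ^ 2
        = (fun q : Fin 3 × Fin 3 => ‖∑ j, conj (β q.1 j) * β q.2 j‖ ^ 2) (i, i')
          * ((fun q : R × R => ‖⟪rowLp ψ q.1, rowLp ψ q.2⟫‖ ^ 2) (r, r')
            * (fun q : GA × GA => ‖γA q.1‖ ^ 2 * ‖γA q.2‖ ^ 2) (g, g')) := by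
    intro i r g i' r' g'
    rw [inner_row_prod β ψ γA γB ξ hξ, hBB]
    simp only [norm_mul, RCLike.norm_conj, Complex.norm_real, mul_pow]
    norm_num
  have hn : Summable fun q : R × R => ‖⟪rowLp ψ q.1, rowLp ψ q.2⟫‖ ^ 2 := summable_rho_row ψ
  have he : Summable fun q : GA × GA => ‖γA q.1‖ ^ 2 * ‖γA q.2‖ ^ 2 :=
    (summable_sq γA).mul_of_nonneg (summable_sq γA) (fun _ => by positivity)
      (fun _ => by positivity)
  have hne : Summable fun z : (R × R) × (GA × GA) =>
      (fun q : R × R => ‖⟪rowLp ψ q.1, rowLp ψ q.2⟫‖ ^ 2) z.1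
        * (fun q : GA × GA => ‖γA q.1‖ ^ 2 * ‖γA q.2‖ ^ 2) z.2 :=
    hn.mul_of_nonneg he (fun _ => by positivity) (fun q => by positivity)
  have hm' : Summable fun q : Fin 3 × Fin 3 => ‖‖∑ j, conj (β q.1 j) * β q.2 j‖ ^ 2‖ :=
    Summable.of_finite
  have hne' : Summable fun z : (R × R) × (GA × GA) =>
      ‖(fun q : R × R => ‖⟪rowLp ψ q.1, rowLp ψ q.2⟫‖ ^ 2) z.1
        * (fun q : GA × GA => ‖γA q.1‖ ^ 2 * ‖γA q.2‖ ^ 2) z.2‖ :=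
    hne.abs.congr fun z => (Real.norm_eq_abs _).symm
  have hn' : Summable fun q : R × R => ‖‖⟪rowLp ψ q.1, rowLp ψ q.2⟫‖ ^ 2‖ :=
    hn.abs.congr fun z => (Real.norm_eq_abs _).symm
  have he' : Summable fun q : GA × GA => ‖‖γA q.1‖ ^ 2 * ‖γA q.2‖ ^ 2‖ :=
    he.abs.congr fun z => (Real.norm_eq_abs _).symm
  have hsq' : Summable fun g : GA => ‖‖γA g‖ ^ 2‖ :=
    (summable_sq γA).abs.congr fun z => (Real.norm_eq_abs _).symm
  have hesum : (∑' q : GA × GA, ‖γA q.1‖ ^ 2 * ‖γA q.2‖ ^ 2) = 1 := by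
    rw [← tsum_mul_tsum_of_summable_norm hsq' hsq', ← l2_norm_sq, hγA]
    norm_num
  have hE : ∀ p : (Fin 3 × R × GA) × (Fin 3 × R × GA),
      ‖⟪rowLp ξ p.1, rowLp ξ p.2⟫‖ ^ 2
        = (fun q : (Fin 3 × Fin 3) × (R × R) × (GA × GA) =>
            (fun q : Fin 3 × Fin 3 => ‖∑ j, conj (β q.1 j) * β q.2 j‖ ^ 2) q.1
              * ((fun q : R × R => ‖⟪rowLp ψ q.1, rowLp ψ q.2⟫‖ ^ 2) q.2.1
                * (fun q : GA × GA => ‖γA q.1‖ ^ 2 * ‖γA q.2‖ ^ 2) q.2.2))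
          (((Equiv.prodProdProdComm (Fin 3) (R × GA) (Fin 3) (R × GA)).trans
            ((Equiv.refl (Fin 3 × Fin 3)).prodCongr (Equiv.prodProdProdComm R GA R GA))) p) := by
    rintro ⟨⟨i, r, g⟩, ⟨i', r', g'⟩⟩
    exact hpoint i r g i' r' g'
  calc Fr ξ
      = ∑' q : (Fin 3 × Fin 3) × (R × R) × (GA × GA),
          (fun q : Fin 3 × Fin 3 => ‖∑ j, conj (β q.1 j) * β q.2 j‖ ^ 2) q.1
            * ((fun q : R × R => ‖⟪rowLp ψ q.1, rowLp ψ q.2⟫‖ ^ 2) q.2.1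
              * (fun q : GA × GA => ‖γA q.1‖ ^ 2 * ‖γA q.2‖ ^ 2) q.2.2) := by
        rw [Fr]
        exact (tsum_congr hE).trans
          (((Equiv.prodProdProdComm (Fin 3) (R × GA) (Fin 3) (R × GA)).trans
            ((Equiv.refl (Fin 3 × Fin 3)).prodCongr (Equiv.prodProdProdComm R GA R GA))).tsum_eq
            (fun q : (Fin 3 × Fin 3) × (R × R) × (GA × GA) =>
              (fun q : Fin 3 × Fin 3 => ‖∑ j, conj (β q.1 j) * β q.2 j‖ ^ 2) q.1
                * ((fun q : R × R => ‖⟪rowLp ψ q.1, rowLp ψ q.2⟫‖ ^ 2) q.2.1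
                  * (fun q : GA × GA => ‖γA q.1‖ ^ 2 * ‖γA q.2‖ ^ 2) q.2.2)))
    _ = (∑' q : Fin 3 × Fin 3, ‖∑ j, conj (β q.1 j) * β q.2 j‖ ^ 2)
          * ∑' z : (R × R) × (GA × GA),
            (fun q : R × R => ‖⟪rowLp ψ q.1, rowLp ψ q.2⟫‖ ^ 2) z.1
              * (fun q : GA × GA => ‖γA q.1‖ ^ 2 * ‖γA q.2‖ ^ 2) z.2 :=
        (tsum_mul_tsum_of_summable_norm hm' hne').symm
    _ = (∑' q : Fin 3 × Fin 3, ‖∑ j, conj (β q.1 j) * β q.2 j‖ ^ 2)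
          * ((∑' q : R × R, ‖⟪rowLp ψ q.1, rowLp ψ q.2⟫‖ ^ 2)
            * ∑' q : GA × GA, ‖γA q.1‖ ^ 2 * ‖γA q.2‖ ^ 2) := by
        rw [← tsum_mul_tsum_of_summable_norm hn' he']
    _ = (∑ i, ∑ i', ‖∑ j, conj (β i j) * β i' j‖ ^ 2) * Fr ψ := by
        rw [hesum, tsum_fintype, Fintype.sum_prod_type, Fr]
        ring

end Product

section Game

/-- Coefficients of `φ₀ + φ₁`. -/
noncomputable def beta0 : Fin 3 → Fin 3 → ℂ := fun i j =>
  if i = 0 ∧ j = 0 then ((Real.sqrt 2 : ℝ) : ℂ) else 0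

/-- Coefficients of `φ₀ - φ₁`. -/
def beta1 : Fin 3 → Fin 3 → ℂ := fun i j => if i = j ∧ ¬ i = 0 then 1 else 0

lemma sqrt2_mul_self : ((Real.sqrt 2 : ℝ) : ℂ) * ((Real.sqrt 2 : ℝ) : ℂ) = 2 := by
  rw [← Complex.ofReal_mul, Real.mul_self_sqrt (by norm_num)]
  norm_num

lemma sqrt2_ne : ((Real.sqrt 2 : ℝ) : ℂ) ≠ 0 :=
  Complex.ofReal_ne_zero.2 (ne_of_gt (Real.sqrt_pos.2 (by norm_num)))

lemma C0 : (∑ i, ∑ i', ‖∑ j, conj (beta0 i j) * beta0 i' j‖ ^ 2) = 4 := by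
  simp [beta0, Fin.sum_univ_three, Complex.conj_ofReal, sqrt2_mul_self]
  norm_num

lemma C1 : (∑ i, ∑ i', ‖∑ j, conj (beta1 i j) * beta1 i' j‖ ^ 2) = 2 := by
  simp [beta1, Fin.sum_univ_three]
  norm_num

lemma gameCoeff_add (i j : Fin 3) : gameCoeff 0 i j + gameCoeff 1 i j = beta0 i j := by
  unfold gameCoeff beta0
  by_cases h : i = 0 ∧ j = 0
  · simp only [h, and_self, if_true]
    field_simp
    linear_combination -sqrt2_mul_self
  · by_cases h2 : i = j
    · have hj : ¬ j = 0 := fun hj0 => h ⟨h2.trans hj0, hj0⟩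
      simp [h, h2, hj]
      norm_num
    · simp [h, h2]

lemma gameCoeff_sub (i j : Fin 3) : gameCoeff 0 i j - gameCoeff 1 i j = beta1 i j := by
  unfold gameCoeff beta1
  by_cases h : i = 0 ∧ j = 0
  · simp [h, h.1]
  · by_cases h2 : i = j
    · have hi : ¬ i = 0 := fun hi0 => h ⟨hi0, h2 ▸ hi0⟩
      have hj : ¬ j = 0 := fun hj0 => h ⟨h2.trans hj0, hj0⟩
      simp [h, h2, hi, hj]
      norm_num
    · have hi : ¬ (i = j ∧ ¬ i = 0) := fun hc => h2 hc.1
      simp [h, h2, hi]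

end Game

end NoEmbez

open NoEmbez
open scoped ComplexConjugate

local notation "⟪" x ", " y "⟫" => @inner ℂ _ _ x y

/-- There is no perfect strategy for the coherent embezzlement game in the tensor product
framework, even with ancillas. -/
theorem no_perfect_coherent_embezzlement_tensor (R_A R_B G_A G_B : Type*) :
    ¬ ∃ (ψ : l2 (R_A × R_B)) (γA : l2 G_A) (γB : l2 G_B)
        (P : Fin 2 → (l2 (Fin 3 × R_A × G_A) →L[ℂ] l2 (Fin 3 × R_A × G_A)))
        (Q : Fin 2 → (l2 (Fin 3 × R_B × G_B) →L[ℂ] l2 (Fin 3 × R_B × G_B)))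
        (Phat Qhat : Fin 2 → (l2 ((Fin 3 × R_A × G_A) × (Fin 3 × R_B × G_B))
          →L[ℂ] l2 ((Fin 3 × R_A × G_A) × (Fin 3 × R_B × G_B))))
        (Φ : Fin 2 → l2 ((Fin 3 × R_A × G_A) × (Fin 3 × R_B × G_B))),
      ‖ψ‖ = 1 ∧ ‖γA‖ = 1 ∧ ‖γB‖ = 1 ∧
      (∀ a, IsSelfAdjoint (P a) ∧ (P a) ∘L (P a) = P a) ∧
      (∀ b, IsSelfAdjoint (Q b) ∧ (Q b) ∘L (Q b) = Q b) ∧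
      P 0 + P 1 = 1 ∧ Q 0 + Q 1 = 1 ∧
      (∀ a, IsAmplificationFst (P a) (Phat a)) ∧
      (∀ b, IsAmplificationSnd (Q b) (Qhat b)) ∧
      (∀ (c : Fin 2) (i : Fin 3) (rA : R_A) (gA : G_A) (j : Fin 3) (rB : R_B) (gB : G_B),
        (Φ c) ((i, rA, gA), (j, rB, gB))
          = gameCoeff c i j * ψ (rA, rB) * γA gA * γB gB) ∧
      (∀ c a b : Fin 2, a + b ≠ c → Phat a (Qhat b (Φ c)) = 0) := by
  rintro ⟨ψ, γA, γB, P, Q, Phat, Qhat, Φ, hψ, hγA, hγB, hP, hQ, hPsum, hQsum,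
    hPamp, hQamp, hΦ, hwin⟩
  -- coordinates of `Φ 0 + Φ 1` and `Φ 0 - Φ 1`
  have hΞ0 : ∀ (i : Fin 3) (r : R_A) (g : G_A) (j : Fin 3) (s : R_B) (h : G_B),
      (Φ 0 + Φ 1) ((i, r, g), (j, s, h)) = beta0 i j * (ψ (r, s) * (γA g * γB h)) := by
    intro i r g j s h
    have hadd : (Φ 0 + Φ 1) ((i, r, g), (j, s, h))
        = Φ 0 ((i, r, g), (j, s, h)) + Φ 1 ((i, r, g), (j, s, h)) := by
      rw [lp.coeFn_add]; rfl
    rw [hadd, hΦ 0 i r g j s h, hΦ 1 i r g j s h]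
    linear_combination (ψ (r, s) * (γA g * γB h)) * gameCoeff_add i j
  have hΞ1 : ∀ (i : Fin 3) (r : R_A) (g : G_A) (j : Fin 3) (s : R_B) (h : G_B),
      (Φ 0 - Φ 1) ((i, r, g), (j, s, h)) = beta1 i j * (ψ (r, s) * (γA g * γB h)) := by
    intro i r g j s h
    have hsub : (Φ 0 - Φ 1) ((i, r, g), (j, s, h))
        = Φ 0 ((i, r, g), (j, s, h)) - Φ 1 ((i, r, g), (j, s, h)) := by
      rw [lp.coeFn_sub]; rfl
    rw [hsub, hΦ 0 i r g j s h, hΦ 1 i r g j s h]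
    linear_combination (ψ (r, s) * (γA g * γB h)) * gameCoeff_sub i j
  -- the difference operators are self-adjoint involutions, hence inner-product preserving
  have hPP : (P 0 - P 1) * (P 0 - P 1) = 1 := by
    have hp : P 0 * P 0 = P 0 := (hP 0).2
    have hq1 : P 1 = 1 - P 0 := by rw [← hPsum]; abel
    have h1 : P 0 * (1 - P 0) = 0 := by rw [mul_sub, mul_one, hp, sub_self]
    have h2 : (1 - P 0) * P 0 = 0 := by rw [sub_mul, one_mul, hp, sub_self]
    have h3 : (1 - P 0) * (1 - P 0) = 1 - P 0 := by rw [mul_sub, mul_one, h2, sub_zero]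
    rw [hq1]
    calc (P 0 - (1 - P 0)) * (P 0 - (1 - P 0))
        = P 0 * P 0 - P 0 * (1 - P 0) - ((1 - P 0) * P 0 - (1 - P 0) * (1 - P 0)) := by
          noncomm_ring
      _ = P 0 - 0 - (0 - (1 - P 0)) := by rw [hp, h1, h2, h3]
      _ = 1 := by abel
  have hQQ : (Q 0 - Q 1) * (Q 0 - Q 1) = 1 := by
    have hp : Q 0 * Q 0 = Q 0 := (hQ 0).2
    have hq1 : Q 1 = 1 - Q 0 := by rw [← hQsum]; abel
    have h1 : Q 0 * (1 - Q 0) = 0 := by rw [mul_sub, mul_one, hp, sub_self]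
    have h2 : (1 - Q 0) * Q 0 = 0 := by rw [sub_mul, one_mul, hp, sub_self]
    have h3 : (1 - Q 0) * (1 - Q 0) = 1 - Q 0 := by rw [mul_sub, mul_one, h2, sub_zero]
    rw [hq1]
    calc (Q 0 - (1 - Q 0)) * (Q 0 - (1 - Q 0))
        = Q 0 * Q 0 - Q 0 * (1 - Q 0) - ((1 - Q 0) * Q 0 - (1 - Q 0) * (1 - Q 0)) := by
          noncomm_ring
      _ = Q 0 - 0 - (0 - (1 - Q 0)) := by rw [hp, h1, h2, h3]
      _ = 1 := by abel
  have hinnA : ∀ f g : l2 (Fin 3 × R_A × G_A), ⟪(P 0 - P 1) f, (P 0 - P 1) g⟫ = ⟪f, g⟫ := by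
    intro f g
    have hsa : IsSelfAdjoint (P 0 - P 1) := ((hP 0).1).sub ((hP 1).1)
    calc ⟪(P 0 - P 1) f, (P 0 - P 1) g⟫ = ⟪f, (P 0 - P 1) ((P 0 - P 1) g)⟫ :=
          hsa.isSymmetric f ((P 0 - P 1) g)
      _ = ⟪f, ((P 0 - P 1) * (P 0 - P 1)) g⟫ := rfl
      _ = ⟪f, g⟫ := by rw [hPP]; rfl
  have hinnB : ∀ f g : l2 (Fin 3 × R_B × G_B), ⟪(Q 0 - Q 1) f, (Q 0 - Q 1) g⟫ = ⟪f, g⟫ := by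
    intro f g
    have hsa : IsSelfAdjoint (Q 0 - Q 1) := ((hQ 0).1).sub ((hQ 1).1)
    calc ⟪(Q 0 - Q 1) f, (Q 0 - Q 1) g⟫ = ⟪f, (Q 0 - Q 1) ((Q 0 - Q 1) g)⟫ :=
          hsa.isSymmetric f ((Q 0 - Q 1) g)
      _ = ⟪f, ((Q 0 - Q 1) * (Q 0 - Q 1)) g⟫ := rfl
      _ = ⟪f, g⟫ := by rw [hQQ]; rfl
  -- the amplified difference operators are amplifications of the differences
  have hampA : IsAmplificationFst (P 0 - P 1) (Phat 0 - Phat 1) := by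
    intro f g y hg x
    have h0 := hPamp 0 f g y hg x
    have h1 := hPamp 1 f g y hg x
    have hc : ((Phat 0 - Phat 1) f) (x, y) = Phat 0 f (x, y) - Phat 1 f (x, y) := by
      rw [ContinuousLinearMap.sub_apply, lp.coeFn_sub]; rfl
    rw [hc, h0, h1, ContinuousLinearMap.sub_apply, lp.coeFn_sub]; rfl
  have hampB : IsAmplificationSnd (Q 0 - Q 1) (Qhat 0 - Qhat 1) := by
    intro f g x hg y
    have h0 := hQamp 0 f g x hg y
    have h1 := hQamp 1 f g x hg y
    have hc : ((Qhat 0 - Qhat 1) f) (x, y) = Qhat 0 f (x, y) - Qhat 1 f (x, y) := by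
      rw [ContinuousLinearMap.sub_apply, lp.coeFn_sub]; rfl
    rw [hc, h0, h1, ContinuousLinearMap.sub_apply, lp.coeFn_sub]; rfl
  -- the amplified projections sum to the identity
  have hidP : ∀ f : l2 ((Fin 3 × R_A × G_A) × (Fin 3 × R_B × G_B)),
      Phat 0 f + Phat 1 f = f := by
    intro f
    refine lp.ext (funext ?_)
    rintro ⟨x, y⟩
    have h0 := hPamp 0 f (colLp f y) y (fun _ => rfl) x
    have h1 := hPamp 1 f (colLp f y) y (fun _ => rfl) x
    have hc : (Phat 0 f + Phat 1 f) (x, y) = Phat 0 f (x, y) + Phat 1 f (x, y) := by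
      rw [lp.coeFn_add]; rfl
    rw [hc, h0, h1]
    have h2 : (P 0) (colLp f y) x + (P 1) (colLp f y) x
        = ((P 0 + P 1) (colLp f y)) x := by
      rw [ContinuousLinearMap.add_apply, lp.coeFn_add]; rfl
    rw [h2, hPsum]
    rfl
  have hidQ : ∀ f : l2 ((Fin 3 × R_A × G_A) × (Fin 3 × R_B × G_B)),
      Qhat 0 f + Qhat 1 f = f := by
    intro f
    refine lp.ext (funext ?_)
    rintro ⟨x, y⟩
    have h0 := hQamp 0 f (rowLp f x) x (fun _ => rfl) y
    have h1 := hQamp 1 f (rowLp f x) x (fun _ => rfl) y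
    have hc : (Qhat 0 f + Qhat 1 f) (x, y) = Qhat 0 f (x, y) + Qhat 1 f (x, y) := by
      rw [lp.coeFn_add]; rfl
    rw [hc, h0, h1]
    have h2 : (Q 0) (rowLp f x) y + (Q 1) (rowLp f x) y
        = ((Q 0 + Q 1) (rowLp f x)) y := by
      rw [ContinuousLinearMap.add_apply, lp.coeFn_add]; rfl
    rw [h2, hQsum]
    rfl
  -- using the winning conditions
  have z1 : Phat 0 (Qhat 1 (Φ 0)) = 0 := hwin 0 0 1 (by decide)
  have z2 : Phat 1 (Qhat 0 (Φ 0)) = 0 := hwin 0 1 0 (by decide)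
  have z3 : Phat 0 (Qhat 0 (Φ 1)) = 0 := hwin 1 0 0 (by decide)
  have z4 : Phat 1 (Qhat 1 (Φ 1)) = 0 := hwin 1 1 1 (by decide)
  have e0 : (Phat 0 - Phat 1) ((Qhat 0 - Qhat 1) (Φ 0)) = Φ 0 := by
    have hfull : Phat 0 (Qhat 0 (Φ 0)) + Phat 0 (Qhat 1 (Φ 0))
        + (Phat 1 (Qhat 0 (Φ 0)) + Phat 1 (Qhat 1 (Φ 0))) = Φ 0 := by
      rw [← map_add, ← map_add, hidQ]
      exact hidP (Φ 0)
    rw [z1, z2] at hfull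
    have hsum : Phat 0 (Qhat 0 (Φ 0)) + Phat 1 (Qhat 1 (Φ 0)) = Φ 0 := by
      simpa using hfull
    have hexp : (Phat 0 - Phat 1) ((Qhat 0 - Qhat 1) (Φ 0))
        = Phat 0 (Qhat 0 (Φ 0)) - Phat 0 (Qhat 1 (Φ 0))
          - (Phat 1 (Qhat 0 (Φ 0)) - Phat 1 (Qhat 1 (Φ 0))) := by
      rw [ContinuousLinearMap.sub_apply, ContinuousLinearMap.sub_apply, map_sub, map_sub]
    rw [hexp, z1, z2, sub_zero, zero_sub, sub_neg_eq_add, hsum]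
  have e1 : (Phat 0 - Phat 1) ((Qhat 0 - Qhat 1) (Φ 1)) = -(Φ 1) := by
    have hfull : Phat 0 (Qhat 0 (Φ 1)) + Phat 0 (Qhat 1 (Φ 1))
        + (Phat 1 (Qhat 0 (Φ 1)) + Phat 1 (Qhat 1 (Φ 1))) = Φ 1 := by
      rw [← map_add, ← map_add, hidQ]
      exact hidP (Φ 1)
    rw [z3, z4] at hfull
    have hsum : Phat 0 (Qhat 1 (Φ 1)) + Phat 1 (Qhat 0 (Φ 1)) = Φ 1 := by
      have := hfull
      simpa [add_comm] using this
    have hexp : (Phat 0 - Phat 1) ((Qhat 0 - Qhat 1) (Φ 1))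
        = Phat 0 (Qhat 0 (Φ 1)) - Phat 0 (Qhat 1 (Φ 1))
          - (Phat 1 (Qhat 0 (Φ 1)) - Phat 1 (Qhat 1 (Φ 1))) := by
      rw [ContinuousLinearMap.sub_apply, ContinuousLinearMap.sub_apply, map_sub, map_sub]
    rw [hexp, z3, z4, zero_sub, sub_zero]
    conv_rhs => rw [← hsum]
    abel
  have key : (Phat 0 - Phat 1) ((Qhat 0 - Qhat 1) (Φ 0 + Φ 1)) = Φ 0 - Φ 1 := by
    rw [map_add, map_add, e0, e1, sub_eq_add_neg]
  -- the invariance chain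
  have s1 : Fr ((Qhat 0 - Qhat 1) (Φ 0 + Φ 1)) = Fr (Φ 0 + Φ 1) := Fr_amp hampB hinnB _
  have s2 : Fc ((Phat 0 - Phat 1) ((Qhat 0 - Qhat 1) (Φ 0 + Φ 1)))
      = Fc ((Qhat 0 - Qhat 1) (Φ 0 + Φ 1)) := Fc_amp hampA hinnA _
  have hinv : Fr (Φ 0 + Φ 1) = Fr (Φ 0 - Φ 1) := by
    rw [← s1, Fr_eq_Fc, ← s2, key, ← Fr_eq_Fc]
  -- the two values of the invariant
  have hfr0 := Fr_prod beta0 ψ γA γB hγA hγB (Φ 0 + Φ 1) hΞ0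
  have hfr1 := Fr_prod beta1 ψ γA γB hγA hγB (Φ 0 - Φ 1) hΞ1
  rw [C0] at hfr0
  rw [C1] at hfr1
  -- positivity of `Fr ψ`
  have hψne : ∃ p : R_A × R_B, ψ p ≠ 0 := by
    by_contra hall
    push_neg at hall
    have hz : ψ = 0 := lp.ext (funext fun p => by simpa using hall p)
    rw [hz] at hψ
    simp at hψ
  obtain ⟨⟨r0, s0⟩, hp0⟩ := hψne
  have hWpos : 0 < Fr ψ := by
    have hterm : ‖⟪rowLp ψ r0, rowLp ψ r0⟫‖ ^ 2 ≤ Fr ψ :=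
      Summable.le_tsum (summable_rho_row ψ) (r0, r0) (fun p _ => by positivity)
    have hnorm : ‖⟪rowLp ψ r0, rowLp ψ r0⟫‖ = ‖rowLp ψ r0‖ ^ 2 := by
      rw [inner_self_eq_norm_sq_to_K, norm_pow]
      simp
    have hco : ‖ψ (r0, s0)‖ ≤ ‖rowLp ψ r0‖ := by
      simpa using lp.norm_apply_le_norm (by norm_num) (rowLp ψ r0) s0
    have h4 : ‖ψ (r0, s0)‖ ^ 2 ≤ ‖rowLp ψ r0‖ ^ 2 := pow_le_pow_left₀ (norm_nonneg _) hco 2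
    have h5 : (‖ψ (r0, s0)‖ ^ 2) ^ 2 ≤ (‖rowLp ψ r0‖ ^ 2) ^ 2 :=
      pow_le_pow_left₀ (by positivity) h4 2
    have h6 : 0 < (‖ψ (r0, s0)‖ ^ 2) ^ 2 := by
      have hpos : 0 < ‖ψ (r0, s0)‖ := norm_pos_iff.2 hp0
      positivity
    calc (0:ℝ) < (‖ψ (r0, s0)‖ ^ 2) ^ 2 := h6
      _ ≤ (‖rowLp ψ r0‖ ^ 2) ^ 2 := h5
      _ = ‖⟪rowLp ψ r0, rowLp ψ r0⟫‖ ^ 2 := by rw [hnorm]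
      _ ≤ Fr ψ := hterm
  rw [hinv, hfr1] at hfr0
  linarith
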